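/- The rank of the 3n×n³ coefficient matrix P of the linear system defining n×n×n plane-stochastic tensors equals 3n − 2. -/
import Mathlib


/-- The `3n × n³` coefficient matrix of the plane-sum constraints defining
`n × n × n` plane-stochastic tensors.  Rows of type `0` encode `∑_{i,j} a_{ijk} = 1`
(fixed `k`), rows of type `1` encode `∑_{j,k} a_{ijk} = 1` (fixed `i`), and rows of
type `2` encode `∑_{i,k} a_{ijk} = 1` (fixed `j`). -/
def planeCoeffMatrix (n : ℕ) :
    Matrix (Fin 3 × Fin n) (Fin n × Fin n × Fin n) ℝ :=
  fun r c =>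
    if (r.1 = 0 ∧ c.2.2 = r.2) ∨
       (r.1 = 1 ∧ c.1 = r.2) ∨
       (r.1 = 2 ∧ c.2.1 = r.2) then 1 else 0

open Matrix

lemma mulVecLin_eq (n : ℕ) (x : Fin 3 × Fin n → ℝ) (c : Fin n × Fin n × Fin n) :
    (planeCoeffMatrix n)ᵀ.mulVecLin x c = x (0, c.2.2) + x (1, c.1) + x (2, c.2.1) := by
  simp only [Matrix.mulVecLin_apply, Matrix.mulVec, Matrix.transpose_apply, dotProduct,
    planeCoeffMatrix]
  rw [Fintype.sum_prod_type]
  rw [Fin.sum_univ_three]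
  simp only [ite_mul, one_mul, zero_mul]
  simp [Finset.sum_ite_eq]

noncomputable def gmap (n : ℕ) : (ℝ × ℝ) →ₗ[ℝ] (Fin 3 × Fin n → ℝ) where
  toFun p := fun r => if r.1 = 0 then p.1 else if r.1 = 1 then p.2 else -p.1 - p.2
  map_add' a b := by funext r; dsimp; split_ifs <;> ring
  map_smul' m a := by funext r; dsimp; split_ifs <;> ring

lemma ker_eq (n : ℕ) (hn : 0 < n) :
    LinearMap.ker (planeCoeffMatrix n)ᵀ.mulVecLin = LinearMap.range (gmap n) := by
  have z : Fin n := ⟨0, hn⟩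
  ext x
  simp only [LinearMap.mem_ker, LinearMap.mem_range]
  constructor
  · intro h
    have h' : ∀ i j k : Fin n, x (0, k) + x (1, i) + x (2, j) = 0 := by
      intro i j k
      have := congrFun h (i, j, k)
      rwa [mulVecLin_eq] at this
    refine ⟨(x (0, z), x (1, z)), ?_⟩
    funext r
    obtain ⟨t, m⟩ := r
    simp only [gmap, LinearMap.coe_mk, AddHom.coe_mk]
    fin_cases t
    · have h1 := h' z z m
      have h2 := h' z z z
      show (if (0:Fin 3) = 0 then x (0,z) else if (0:Fin 3) = 1 then x (1,z)
        else -x (0,z) - x (1,z)) = x (0, m)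
      rw [if_pos rfl]
      linarith
    · have h1 := h' m z z
      have h2 := h' z z z
      show (if (1:Fin 3) = 0 then x (0,z) else if (1:Fin 3) = 1 then x (1,z)
        else -x (0,z) - x (1,z)) = x (1, m)
      rw [if_neg (by decide), if_pos rfl]
      linarith
    · have h1 := h' z m z
      have h2 := h' z z z
      show (if (2:Fin 3) = 0 then x (0,z) else if (2:Fin 3) = 1 then x (1,z)
        else -x (0,z) - x (1,z)) = x (2, m)
      rw [if_neg (by decide), if_neg (by decide)]
      linarith
  · rintro ⟨⟨a, b⟩, rfl⟩
    funext c
    rw [mulVecLin_eq]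
    simp [gmap]

lemma gmap_inj (n : ℕ) (hn : 0 < n) : Function.Injective (gmap n) := by
  have z : Fin n := ⟨0, hn⟩
  rw [injective_iff_map_eq_zero]
  rintro ⟨a, b⟩ h
  have h1 := congrFun h (0, z)
  have h2 := congrFun h (1, z)
  simp [gmap] at h1 h2
  simp [h1, h2, Prod.ext_iff]

theorem stmt_13 (n : ℕ) (hn : 0 < n) :
    (planeCoeffMatrix n).rank = 3 * n - 2 := by
  have hker : Module.finrank ℝ (LinearMap.ker (planeCoeffMatrix n)ᵀ.mulVecLin) = 2 := by
    rw [ker_eq n hn, LinearMap.finrank_range_of_inj (gmap_inj n hn)]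
    simp
  have hrn := LinearMap.finrank_range_add_finrank_ker (planeCoeffMatrix n)ᵀ.mulVecLin
  rw [hker] at hrn
  have hdom : Module.finrank ℝ (Fin 3 × Fin n → ℝ) = 3 * n := by
    simp [Module.finrank_pi]
  rw [hdom] at hrn
  rw [← Matrix.rank_transpose]
  unfold Matrix.rank
  omega
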